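/- Let R be a commutative ring with ℤ-linear endomorphisms ψ^n (n ≥ 1) satisfying ψ^1 = id and ψ^m ψ^n = ψ^{mn} = ψ^n ψ^m. Suppose given, for each prime p, an additive endomorphism g(p) of R such that ψ^p g(q) + g(p) ψ^q = ψ^q g(p) + g(q) ψ^p for all primes p, q. Then there exists a unique function f : ℕ₊ → End(R) with f(p) = g(p) for all primes p and satisfying f(mn) = ψ^m f(n) + f(m) ψ^n for all m, n ≥ 1. -/
import Mathlib


private def Fder {R : Type*} [CommRing R] (ψ g : ℕ → (R →+ R)) (n : ℕ) : (R →+ R) :=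
  if h : n ≤ 1 then 0
  else
    have : n / n.minFac < n :=
      Nat.div_lt_self (by omega) (Nat.minFac_prime (by omega)).one_lt
    (ψ n.minFac).comp (Fder ψ g (n / n.minFac)) + (g n.minFac).comp (ψ (n / n.minFac))

private lemma Fder_one {R : Type*} [CommRing R] (ψ g : ℕ → (R →+ R)) :
    Fder ψ g 1 = 0 := by rw [Fder]; simp

private lemma Fder_eq {R : Type*} [CommRing R] (ψ g : ℕ → (R →+ R)) (n : ℕ) (h : 2 ≤ n) :
    Fder ψ g n = (ψ n.minFac).comp (Fder ψ g (n / n.minFac))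
      + (g n.minFac).comp (ψ (n / n.minFac)) := by
  rw [Fder, dif_neg (by omega)]

private lemma Fder_prime {R : Type*} [CommRing R] (ψ g : ℕ → (R →+ R))
    (hψ1 : ψ 1 = AddMonoidHom.id R)
    (hψ : ∀ m n : ℕ, 1 ≤ m → 1 ≤ n → (ψ m).comp (ψ n) = ψ (m * n))
    (hψcomm : ∀ m n : ℕ, 1 ≤ m → 1 ≤ n → (ψ m).comp (ψ n) = (ψ n).comp (ψ m))
    (hg : ∀ p q : ℕ, p.Prime → q.Prime →
      (ψ p).comp (g q) + (g p).comp (ψ q) = (ψ q).comp (g p) + (g q).comp (ψ p)) :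
    ∀ n : ℕ, 1 ≤ n → ∀ q : ℕ, q.Prime →
      Fder ψ g (q * n) = (ψ q).comp (Fder ψ g n) + (g q).comp (ψ n) := by
  intro n
  induction n using Nat.strong_induction_on with
  | _ n ih =>
    intro hn q hq
    rcases eq_or_lt_of_le hn with h1 | h2
    · -- n = 1
      subst h1
      rw [mul_one, Fder_eq ψ g q hq.two_le, hq.minFac_eq, Nat.div_self hq.pos, Fder_one]
    · -- n ≥ 2
      have hn2 : 2 ≤ n := h2
      have hqn2 : 2 ≤ q * n := le_trans hq.two_le (Nat.le_mul_of_pos_right q (by omega))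
      by_cases hc : q ≤ n.minFac
      · -- minFac (q*n) = q
        have hmin : (q * n).minFac = q := by
          refine le_antisymm (Nat.minFac_le_of_dvd hq.two_le (dvd_mul_right q n)) ?_
          have hr := Nat.minFac_prime (show q * n ≠ 1 by omega)
          rcases (hr.dvd_mul.mp (Nat.minFac_dvd (q * n))) with h | h
          · exact ((Nat.prime_dvd_prime_iff_eq hr hq).mp h).ge
          · exact le_trans hc (Nat.minFac_le_of_dvd hr.two_le h)
        rw [Fder_eq ψ g (q * n) hqn2, hmin, Nat.mul_div_cancel_left n hq.pos]
      · -- minFac (q*n) = n.minFac =: p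
        push_neg at hc
        set p := n.minFac with hp_def
        have hp : p.Prime := Nat.minFac_prime (by omega)
        have hpn : p ∣ n := Nat.minFac_dvd n
        have hmin : (q * n).minFac = p := by
          refine le_antisymm (Nat.minFac_le_of_dvd hp.two_le (hpn.mul_left q)) ?_
          have hr := Nat.minFac_prime (show q * n ≠ 1 by omega)
          rcases (hr.dvd_mul.mp (Nat.minFac_dvd (q * n))) with h | h
          · have := (Nat.prime_dvd_prime_iff_eq hr hq).mp h
            have hle : (q * n).minFac ≤ p := Nat.minFac_le_of_dvd hp.two_le (hpn.mul_left q)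
            omega
          · exact Nat.minFac_le_of_dvd hr.two_le h
        have hple : p ≤ n := Nat.minFac_le (by omega)
        have hdiv1 : 1 ≤ n / p := (Nat.one_le_div_iff hp.pos).mpr hple
        have hdivlt : n / p < n := Nat.div_lt_self (by omega) hp.one_lt
        have hqnp : q * n / p = q * (n / p) := Nat.mul_div_assoc q hpn
        have hpnp : p * (n / p) = n := Nat.mul_div_cancel' hpn
        have hψn : ψ n = (ψ p).comp (ψ (n / p)) := by
          rw [hψ p (n / p) hp.one_le hdiv1, hpnp]
        rw [Fder_eq ψ g (q * n) hqn2, hmin, hqnp, ih (n / p) hdivlt hdiv1 q hq,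
          Fder_eq ψ g n hn2, ← hp_def,
          ← hψ q (n / p) hq.one_le hdiv1, hψn]
        ext x
        simp only [AddMonoidHom.add_apply, AddMonoidHom.comp_apply, map_add]
        have k1 := DFunLike.congr_fun (hg p q hp hq) (ψ (n / p) x)
        have k2 := DFunLike.congr_fun (hψcomm p q hp.one_le hq.one_le)
          ((Fder ψ g (n / p)) x)
        simp only [AddMonoidHom.add_apply, AddMonoidHom.comp_apply] at k1 k2
        linear_combination k1 + k2

/-- Given additive endomorphisms `g(p)` for each prime `p` with
`ψ^p g(q) + g(p) ψ^q = ψ^q g(p) + g(q) ψ^p`, there is a unique λ-derivation `f`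
(unique on positive integers) extending `g`. -/
theorem stmt_2 {R : Type*} [CommRing R] (ψ g : ℕ → (R →+ R))
    (hψ1 : ψ 1 = AddMonoidHom.id R)
    (hψ : ∀ m n : ℕ, 1 ≤ m → 1 ≤ n → (ψ m).comp (ψ n) = ψ (m * n))
    (hψcomm : ∀ m n : ℕ, 1 ≤ m → 1 ≤ n → (ψ m).comp (ψ n) = (ψ n).comp (ψ m))
    (hg : ∀ p q : ℕ, p.Prime → q.Prime →
      (ψ p).comp (g q) + (g p).comp (ψ q) = (ψ q).comp (g p) + (g q).comp (ψ p)) :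
    (∃ f : ℕ → (R →+ R),
      (∀ p : ℕ, p.Prime → f p = g p) ∧
      (∀ m n : ℕ, 1 ≤ m → 1 ≤ n →
        f (m * n) = (ψ m).comp (f n) + (f m).comp (ψ n))) ∧
    (∀ f f' : ℕ → (R →+ R),
      ((∀ p : ℕ, p.Prime → f p = g p) ∧
        (∀ m n : ℕ, 1 ≤ m → 1 ≤ n →
          f (m * n) = (ψ m).comp (f n) + (f m).comp (ψ n))) →
      ((∀ p : ℕ, p.Prime → f' p = g p) ∧
        (∀ m n : ℕ, 1 ≤ m → 1 ≤ n →
          f' (m * n) = (ψ m).comp (f' n) + (f' m).comp (ψ n))) →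
      ∀ n : ℕ, 1 ≤ n → f n = f' n) := by
  have hprime := Fder_prime ψ g hψ1 hψ hψcomm hg
  constructor
  · refine ⟨Fder ψ g, ?_, ?_⟩
    · intro p hp
      have := hprime 1 le_rfl p hp
      rw [mul_one, Fder_one, hψ1] at this
      simpa using this
    · intro m
      induction m using Nat.strong_induction_on with
      | _ m ih =>
        intro n hm hn
        rcases eq_or_lt_of_le hm with h1 | h2
        · subst h1
          rw [one_mul, hψ1, Fder_one]
          simp
        · set p := m.minFac with hp_def
          have hp : p.Prime := Nat.minFac_prime (by omega)
          have hpm : p ∣ m := Nat.minFac_dvd m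
          have hple : p ≤ m := Nat.minFac_le (by omega)
          have hdiv1 : 1 ≤ m / p := (Nat.one_le_div_iff hp.pos).mpr hple
          have hdivlt : m / p < m := Nat.div_lt_self (by omega) hp.one_lt
          have hpm' : p * (m / p) = m := Nat.mul_div_cancel' hpm
          have hmn : m * n = p * ((m / p) * n) := by rw [← mul_assoc, hpm']
          have hψm : ψ m = (ψ p).comp (ψ (m / p)) := by
            rw [hψ p (m / p) hp.one_le hdiv1, hpm']
          have hfm : Fder ψ g m = (ψ p).comp (Fder ψ g (m / p)) + (g p).comp (ψ (m / p)) := by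
            conv_lhs => rw [← hpm']
            exact hprime (m / p) hdiv1 p hp
          rw [hmn, hprime ((m / p) * n) (Nat.one_le_iff_ne_zero.mpr (by positivity)) p hp,
            ih (m / p) hdivlt n hdiv1 hn, hfm, hψm,
            ← hψ (m / p) n hdiv1 hn]
          ext x
          simp only [AddMonoidHom.add_apply, AddMonoidHom.comp_apply, map_add]
          ring
  · rintro f f' ⟨hf1, hf2⟩ ⟨hf'1, hf'2⟩ n
    have hone : ∀ (h : ℕ → (R →+ R)),
        (∀ m n : ℕ, 1 ≤ m → 1 ≤ n →
          h (m * n) = (ψ m).comp (h n) + (h m).comp (ψ n)) → h 1 = 0 := by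
      intro h hh
      have := hh 1 1 le_rfl le_rfl
      rw [mul_one, hψ1] at this
      simp only [AddMonoidHom.id_comp, AddMonoidHom.comp_id] at this
      have : h 1 + 0 = h 1 + h 1 := by rw [add_zero]; exact this
      exact (add_left_cancel this).symm
    induction n using Nat.strong_induction_on with
    | _ n ih =>
      intro hn
      rcases eq_or_lt_of_le hn with h1 | h2
      · subst h1
        rw [hone f hf2, hone f' hf'2]
      · set p := n.minFac with hp_def
        have hp : p.Prime := Nat.minFac_prime (by omega)
        have hpn : p ∣ n := Nat.minFac_dvd n
        have hple : p ≤ n := Nat.minFac_le (by omega)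
        have hdiv1 : 1 ≤ n / p := (Nat.one_le_div_iff hp.pos).mpr hple
        have hdivlt : n / p < n := Nat.div_lt_self (by omega) hp.one_lt
        have hpn' : p * (n / p) = n := Nat.mul_div_cancel' hpn
        rw [← hpn', hf2 p (n / p) hp.one_le hdiv1, hf'2 p (n / p) hp.one_le hdiv1,
          ih (n / p) hdivlt hdiv1, hf1 p hp, hf'1 p hp]
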